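/- If G is a graph with γ_g'(G) = 3, then for every edge e of G, γ_g'(G−e) ≤ 4. -/
import Mathlib


open Classical

noncomputable section

namespace DomGame

variable {V : Type*} [Fintype V]

/-- Closed neighborhood of `v` as a `Finset`. -/
noncomputable def N (G : SimpleGraph V) (v : V) : Finset V :=
  Finset.univ.filter (fun u => G.Adj v u ∨ u = v)

/-- Legal moves given the set `S` of already dominated vertices. -/
noncomputable def moves (G : SimpleGraph V) (S : Finset V) : Finset V :=
  Finset.univ.filter (fun v => ¬ N G v ⊆ S)

lemma card_lt {G : SimpleGraph V} {S : Finset V} (v : V) (hv : v ∈ moves G S) :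
    (Finset.univ \ (S ∪ N G v)).card < (Finset.univ \ S).card := by
  simp only [moves, Finset.mem_filter] at hv
  obtain ⟨u, hu, hus⟩ := Finset.not_subset.mp hv.2
  apply Finset.card_lt_card
  refine ⟨Finset.sdiff_subset_sdiff (le_refl _) Finset.subset_union_left, ?_⟩
  intro hsub
  have := hsub (Finset.mem_sdiff.mpr ⟨Finset.mem_univ u, hus⟩)
  rw [Finset.mem_sdiff, Finset.mem_union] at this
  exact this.2 (Or.inr hu)

mutual
/-- Number of moves with optimal play when it is Dominator's turn and
`S` is the set of already dominated vertices. -/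
noncomputable def gameD (G : SimpleGraph V) (S : Finset V) : ℕ :=
  if h : (moves G S).Nonempty then
    1 + (moves G S).attach.inf' (by simpa using h)
      (fun v => gameS G (S ∪ N G v.1))
  else 0
termination_by (Finset.univ \ S).card
decreasing_by exact card_lt v.1 v.2

/-- Number of moves with optimal play when it is Staller's turn. -/
noncomputable def gameS (G : SimpleGraph V) (S : Finset V) : ℕ :=
  if h : (moves G S).Nonempty then
    1 + (moves G S).attach.sup' (by simpa using h)
      (fun v => gameD G (S ∪ N G v.1))
  else 0
termination_by (Finset.univ \ S).card
decreasing_by exact card_lt v.1 v.2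
end

/-- The (Dominator-start) game domination number. -/
noncomputable def gammaG (G : SimpleGraph V) : ℕ := gameD G ∅

/-- The Staller-start game domination number. -/
noncomputable def gammaG' (G : SimpleGraph V) : ℕ := gameS G ∅

end DomGame

namespace DomGame

open Finset

variable {V : Type*} [Fintype V]

lemma mem_N_self (G : SimpleGraph V) (v : V) : v ∈ N G v := by simp [N]

lemma mem_N {G : SimpleGraph V} {v u : V} : u ∈ N G v ↔ G.Adj v u ∨ u = v := by simp [N]

lemma mem_moves {G : SimpleGraph V} {S : Finset V} {v : V} :
    v ∈ moves G S ↔ ¬ N G v ⊆ S := by simp [moves]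

lemma moves_eq_empty {G : SimpleGraph V} {S : Finset V} (h : moves G S = ∅) :
    S = Finset.univ := by
  apply Finset.eq_univ_of_forall
  intro v
  have hv : v ∉ moves G S := h ▸ Finset.notMem_empty v
  rw [mem_moves, not_not] at hv
  exact hv (mem_N_self G v)

lemma moves_univ (G : SimpleGraph V) : moves G (Finset.univ : Finset V) = ∅ := by
  ext v; simp [moves]

lemma gameS_univ (G : SimpleGraph V) : gameS G (Finset.univ : Finset V) = 0 := by
  rw [gameS, dif_neg (by simp [moves_univ])]

lemma gameD_eq_zero {G : SimpleGraph V} {S : Finset V} (h : gameD G S = 0) :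
    S = Finset.univ := by
  rw [gameD] at h
  by_cases hne : (moves G S).Nonempty
  · rw [dif_pos hne] at h; omega
  · exact moves_eq_empty (Finset.not_nonempty_iff_eq_empty.mp hne)

lemma forall_gameD_le {G : SimpleGraph V} (h : gameS G (∅ : Finset V) = 3) (v : V) :
    gameD G (N G v) ≤ 2 := by
  have hv : v ∈ moves G ∅ :=
    mem_moves.mpr (fun hs => by simpa using hs (mem_N_self G v))
  rw [gameS, dif_pos ⟨v, hv⟩] at h
  have h4 := Nat.add_left_cancel (n := 1) (h.trans (show (3:ℕ) = 1 + 2 from rfl))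
  have h5 := le_trans
    (Finset.le_sup' (fun w : {z // z ∈ moves G (∅ : Finset V)} => gameD G (∅ ∪ N G w.1))
      (Finset.mem_attach _ ⟨v, hv⟩)) (le_of_eq h4)
  simpa using h5

lemma gameS_le_one' {G : SimpleGraph V} {S : Finset V} (h : gameS G S ≤ 1) {u : V}
    (hu : ¬ N G u ⊆ S) : S ∪ N G u = Finset.univ := by
  have hum : u ∈ moves G S := mem_moves.mpr hu
  rw [gameS, dif_pos ⟨u, hum⟩] at h
  have hsup := Nat.le_of_add_le_add_left (le_trans h (by norm_num : (1:ℕ) ≤ 1 + 0))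
  have h3 : gameD G (S ∪ N G u) = 0 :=
    Nat.le_zero.mp (le_trans
      (Finset.le_sup' (fun w : {z // z ∈ moves G S} => gameD G (S ∪ N G w.1))
        (Finset.mem_attach _ ⟨u, hum⟩)) hsup)
  exact gameD_eq_zero h3

lemma gameD_le_two' {G : SimpleGraph V} {S : Finset V} (h : gameD G S ≤ 2) :
    S = Finset.univ ∨ ∃ w, ¬ N G w ⊆ S ∧ gameS G (S ∪ N G w) ≤ 1 := by
  by_cases hne : (moves G S).Nonempty
  · right
    rw [gameD, dif_pos hne] at h
    obtain ⟨w, hwmem, hweq⟩ := Finset.exists_mem_eq_inf' (s := (moves G S).attach)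
      (by simpa using hne) (fun v : {z // z ∈ moves G S} => gameS G (S ∪ N G v.1))
    rw [hweq] at h
    exact ⟨w.1, mem_moves.mp w.2, by omega⟩
  · exact Or.inl (moves_eq_empty (Finset.not_nonempty_iff_eq_empty.mp hne))

lemma gameS_le_succ {G : SimpleGraph V} {S : Finset V} {n : ℕ}
    (h : ∀ u, ¬ N G u ⊆ S → gameD G (S ∪ N G u) ≤ n) : gameS G S ≤ n + 1 := by
  rw [gameS]
  by_cases hne : (moves G S).Nonempty
  · rw [dif_pos hne]
    exact le_trans (Nat.add_le_add_left
      (Finset.sup'_le _ _ (fun v _ => h v.1 (mem_moves.mp v.2))) 1) (by omega)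
  · rw [dif_neg hne]; omega

lemma gameD_le_succ {G : SimpleGraph V} {S : Finset V} {n : ℕ}
    (h : S = Finset.univ ∨ ∃ w, ¬ N G w ⊆ S ∧ gameS G (S ∪ N G w) ≤ n) :
    gameD G S ≤ n + 1 := by
  rw [gameD]
  by_cases hne : (moves G S).Nonempty
  · rw [dif_pos hne]
    rcases h with h | ⟨w, hw1, hw2⟩
    · obtain ⟨v, hv⟩ := hne
      rw [mem_moves, h] at hv
      exact absurd (Finset.subset_univ _) hv
    · have hwm : w ∈ moves G S := mem_moves.mpr hw1
      have h2 := Finset.inf'_le (fun v : {z // z ∈ moves G S} => gameS G (S ∪ N G v.1))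
        (Finset.mem_attach _ ⟨w, hwm⟩)
      exact le_trans (Nat.add_le_add_left (le_trans h2 hw2) 1) (by omega)
  · rw [dif_neg hne]; omega

lemma gameD_le_three_of {G : SimpleGraph V} {S : Finset V}
    (h : S = Finset.univ ∨ ∃ w, ¬ N G w ⊆ S ∧ ∀ u, ¬ N G u ⊆ S ∪ N G w →
      (S ∪ N G w ∪ N G u = Finset.univ ∨
        ∃ t, ¬ N G t ⊆ S ∪ N G w ∪ N G u ∧ S ∪ N G w ∪ N G u ∪ N G t = Finset.univ)) :
    gameD G S ≤ 3 := by
  apply gameD_le_succ (n := 2)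
  rcases h with h | ⟨w, hw1, hw2⟩
  · exact Or.inl h
  · refine Or.inr ⟨w, hw1, gameS_le_succ (n := 1) fun u hu => gameD_le_succ (n := 0) ?_⟩
    rcases hw2 u hu with h | ⟨t, ht1, ht2⟩
    · exact Or.inl h
    · exact Or.inr ⟨t, ht1, by rw [ht2, gameS_univ]⟩

section helpers

variable {G G' : SimpleGraph V} {x y : V}

lemma helperA (hne : x ≠ y)
    (dich : ∀ z a, a ∈ N G z → a ∉ N G' z → (z = x ∧ a = y) ∨ (z = y ∧ a = x))
    (hv : N G x = Finset.univ) (hz : y ∉ N G' x) :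
    N G' x ∪ N G' y = Finset.univ := by
  apply Finset.eq_univ_of_forall
  intro a
  by_cases h : a ∈ N G' x
  · exact Finset.mem_union_left _ h
  · have ha : a ∈ N G x := hv.ge (Finset.mem_univ a)
    rcases dich x a ha h with ⟨-, rfl⟩ | ⟨hxy', -⟩
    · exact Finset.mem_union_right _ (mem_N_self _ _)
    · exact absurd hxy' hne

lemma helperB2 (hne : x ≠ y) {v : V}
    (sub : ∀ z, N G' z ⊆ N G z)
    (dich : ∀ z a, a ∈ N G z → a ∉ N G' z → (z = x ∧ a = y) ∨ (z = y ∧ a = x))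
    (hw0 : ¬ N G x ⊆ N G v)
    (hyv : y ∉ N G v)
    (hleg : N G' x ⊆ N G' v)
    (hP1 : ∀ u, ¬ N G u ⊆ N G v ∪ N G x → N G v ∪ N G x ∪ N G u = Finset.univ) :
    ∀ u, ¬ N G' u ⊆ N G' v ∪ N G' y → N G' v ∪ N G' y ∪ N G' u = Finset.univ := by
  have hNv : N G v ⊆ N G' v := by
    intro a ha
    by_contra hna
    rcases dich v a ha hna with ⟨rfl, rfl⟩ | ⟨rfl, rfl⟩
    · exact hw0 subset_rfl
    · exact hyv (mem_N_self _ _)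
  have hTT : N G v ∪ N G x ⊆ N G' v ∪ N G' y := by
    intro a ha
    rcases Finset.mem_union.mp ha with ha | ha
    · exact Finset.mem_union_left _ (hNv ha)
    · by_cases h2 : a ∈ N G' x
      · exact Finset.mem_union_left _ (hleg h2)
      · rcases dich x a ha h2 with ⟨-, rfl⟩ | ⟨h3, -⟩
        · exact Finset.mem_union_right _ (mem_N_self _ _)
        · exact absurd h3 hne
  intro u hu
  have hufree : ¬ N G u ⊆ N G v ∪ N G x := fun h => hu (((sub u).trans h).trans hTT)
  have huniv := hP1 u hufree
  apply Finset.eq_univ_of_forall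
  intro a
  have haU : a ∈ N G v ∪ N G x ∪ N G u := huniv.ge (Finset.mem_univ a)
  rcases Finset.mem_union.mp haU with ha | ha
  · exact Finset.mem_union_left _ (hTT ha)
  · by_cases h2 : a ∈ N G' u
    · exact Finset.mem_union_right _ h2
    · rcases dich u a ha h2 with ⟨-, rfl⟩ | ⟨-, rfl⟩
      · exact Finset.mem_union_left _ (Finset.mem_union_right _ (mem_N_self _ _))
      · exact Finset.mem_union_left _ (Finset.mem_union_left _ (hleg (mem_N_self _ _)))

lemma helperB1 {v w0 u : V}
    (sub : ∀ z, N G' z ⊆ N G z)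
    (dich : ∀ z a, a ∈ N G z → a ∉ N G' z → (z = x ∧ a = y) ∨ (z = y ∧ a = x))
    (hP1 : ∀ u', ¬ N G u' ⊆ N G v ∪ N G w0 → N G v ∪ N G w0 ∪ N G u' = Finset.univ)
    (hu : ¬ N G' u ⊆ N G' v ∪ N G' w0)
    (hD : N G' v ∪ N G' w0 ∪ N G' u ≠ Finset.univ) :
    ∃ t, ¬ N G' t ⊆ N G' v ∪ N G' w0 ∪ N G' u ∧
      N G' v ∪ N G' w0 ∪ N G' u ∪ N G' t = Finset.univ := by
  set D := N G' v ∪ N G' w0 ∪ N G' u with hDdef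
  have hvD : N G' v ⊆ D := Finset.subset_union_left.trans Finset.subset_union_left
  have hw0D : N G' w0 ⊆ D := Finset.subset_union_right.trans Finset.subset_union_left
  have huD : N G' u ⊆ D := Finset.subset_union_right
  have keyfact : ∀ a, a ∈ N G v ∪ N G w0 ∪ N G u → a ∉ D →
      (a = y ∧ x ∈ D) ∨ (a = x ∧ y ∈ D) := by
    intro a ha haD
    have step : ∀ p : V, a ∈ N G p → N G' p ⊆ D → (a = y ∧ x ∈ D) ∨ (a = x ∧ y ∈ D) := by
      intro p hp hpD
      have h2 : a ∉ N G' p := fun h => haD (hpD h)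
      rcases dich p a hp h2 with ⟨rfl, rfl⟩ | ⟨rfl, rfl⟩
      · exact Or.inl ⟨rfl, hpD (mem_N_self _ _)⟩
      · exact Or.inr ⟨rfl, hpD (mem_N_self _ _)⟩
    rcases Finset.mem_union.mp ha with ha' | ha'
    · rcases Finset.mem_union.mp ha' with ha'' | ha''
      · exact step v ha'' hvD
      · exact step w0 ha'' hw0D
    · exact step u ha' huD
  obtain ⟨z0, hz0⟩ : ∃ z0, z0 ∉ D := by
    by_contra h; push_neg at h; exact hD (Finset.eq_univ_of_forall h)
  by_cases hug : N G u ⊆ N G v ∪ N G w0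
  · -- u was illegal in G
    obtain ⟨z, hz1, hz2⟩ := Finset.not_subset.mp hu
    have hzT : z ∈ N G v ∪ N G w0 := hug (sub u hz1)
    have hxyD : x ∈ D ∧ y ∈ D := by
      have step : ∀ p, z ∈ N G p → N G' p ⊆ N G' v ∪ N G' w0 → x ∈ D ∧ y ∈ D := by
        intro p hp hpsub
        have h2 : z ∉ N G' p := fun h => hz2 (hpsub h)
        rcases dich p z hp h2 with ⟨rfl, rfl⟩ | ⟨rfl, rfl⟩
        · exact ⟨Finset.mem_union_left _ (hpsub (mem_N_self _ _)), huD hz1⟩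
        · exact ⟨huD hz1, Finset.mem_union_left _ (hpsub (mem_N_self _ _))⟩
      rcases Finset.mem_union.mp hzT with h | h
      · exact step v h Finset.subset_union_left
      · exact step w0 h Finset.subset_union_right
    have hTD : ∀ a, a ∈ N G v ∪ N G w0 → a ∈ D := by
      intro a ha
      by_cases haD : a ∈ D
      · exact haD
      · exfalso
        rcases keyfact a (Finset.mem_union_left _ ha) haD with ⟨rfl, -⟩ | ⟨rfl, -⟩
        · exact haD hxyD.2
        · exact haD hxyD.1
    have hz0T : ¬ N G z0 ⊆ N G v ∪ N G w0 := fun h => hz0 (hTD z0 (h (mem_N_self _ _)))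
    have huniv := hP1 z0 hz0T
    refine ⟨z0, fun h => hz0 (h (mem_N_self _ _)), ?_⟩
    apply Finset.eq_univ_of_forall
    intro a
    by_cases haD : a ∈ D
    · exact Finset.mem_union_left _ haD
    · have ha4 : a ∈ N G v ∪ N G w0 ∪ N G z0 := huniv.ge (Finset.mem_univ a)
      rcases Finset.mem_union.mp ha4 with ha' | ha'
      · exact absurd (hTD a ha') haD
      · by_cases h5 : a ∈ N G' z0
        · exact Finset.mem_union_right _ h5
        · rcases dich z0 a ha' h5 with ⟨rfl, rfl⟩ | ⟨rfl, rfl⟩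
          · exact absurd hxyD.1 hz0
          · exact absurd hxyD.2 hz0
  · -- u legal in G
    have huniv := hP1 u hug
    rcases keyfact z0 (huniv.ge (Finset.mem_univ z0)) hz0 with ⟨heq, hxD⟩ | ⟨heq, hyD⟩
    · refine ⟨z0, fun h => hz0 (h (mem_N_self _ _)), ?_⟩
      apply Finset.eq_univ_of_forall
      intro a
      by_cases haD : a ∈ D
      · exact Finset.mem_union_left _ haD
      · rcases keyfact a (huniv.ge (Finset.mem_univ a)) haD with ⟨ha1, -⟩ | ⟨-, hyD2⟩
        · exact Finset.mem_union_right _ (by rw [ha1, ← heq]; exact mem_N_self _ _)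
        · exact absurd (by rw [heq]; exact hyD2 : z0 ∈ D) hz0
    · refine ⟨z0, fun h => hz0 (h (mem_N_self _ _)), ?_⟩
      apply Finset.eq_univ_of_forall
      intro a
      by_cases haD : a ∈ D
      · exact Finset.mem_union_left _ haD
      · rcases keyfact a (huniv.ge (Finset.mem_univ a)) haD with ⟨-, hxD2⟩ | ⟨ha1, -⟩
        · exact absurd (by rw [heq]; exact hxD2 : z0 ∈ D) hz0
        · exact Finset.mem_union_right _ (by rw [ha1, ← heq]; exact mem_N_self _ _)

end helpers

end DomGame


open DomGame in
/-- If `γ_g'(G) = 3`, then `γ_g'(G−e) ≤ 4` for every edge `e`. -/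
theorem gameS_three_edge_removal {V : Type*} [Fintype V] (G : SimpleGraph V)
    (hG : gammaG' G = 3) (e : Sym2 V) (he : e ∈ G.edgeSet) :
    gammaG' (G.deleteEdges {e}) ≤ 4 := by
  have hG3 : gameS G (∅ : Finset V) = 3 := hG
  have hforall : ∀ v, gameD G (N G v) ≤ 2 := fun v => forall_gameD_le hG3 v
  have hprop : ∀ v, N G v = Finset.univ ∨ ∃ w, ¬ N G w ⊆ N G v ∧
      ∀ u, ¬ N G u ⊆ N G v ∪ N G w → N G v ∪ N G w ∪ N G u = Finset.univ := by
    intro v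
    rcases gameD_le_two' (hforall v) with h | ⟨w, h1, h2⟩
    · exact Or.inl h
    · exact Or.inr ⟨w, h1, fun u hu => gameS_le_one' h2 hu⟩
  induction e using Sym2.ind with
  | _ x y =>
  have hxy : G.Adj x y := (SimpleGraph.mem_edgeSet G).mp he
  have hne : x ≠ y := hxy.ne
  set G' : SimpleGraph V := G.deleteEdges {s(x, y)} with hG'def
  have sub : ∀ z, N G' z ⊆ N G z := by
    intro z a ha
    rw [mem_N] at ha ⊢
    rw [hG'def, SimpleGraph.deleteEdges_adj] at ha
    rcases ha with ⟨h, -⟩ | h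
    · exact Or.inl h
    · exact Or.inr h
  have dich : ∀ z a, a ∈ N G z → a ∉ N G' z → (z = x ∧ a = y) ∨ (z = y ∧ a = x) := by
    intro z a h1 h2
    rw [mem_N] at h1
    rw [mem_N, hG'def, SimpleGraph.deleteEdges_adj] at h2
    push_neg at h2
    rcases h1 with h1 | rfl
    · have h3 := h2.1 h1
      rw [Set.mem_singleton_iff] at h3
      exact Sym2.eq_iff.mp h3
    · exact absurd rfl h2.2
  show gameS G' (∅ : Finset V) ≤ 4
  refine gameS_le_succ (n := 3) fun v _ => ?_
  rw [Finset.empty_union]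
  apply gameD_le_three_of
  rcases hprop v with hA | ⟨w0, hw0, hP1⟩
  · -- Case A : N G v = univ
    by_cases hAv : N G' v = Finset.univ
    · exact Or.inl hAv
    · obtain ⟨z, hz⟩ : ∃ z, z ∉ N G' v := by
        by_contra h; push_neg at h; exact hAv (Finset.eq_univ_of_forall h)
      have hzN : z ∈ N G v := hA.ge (Finset.mem_univ z)
      rcases dich v z hzN hz with ⟨rfl, rfl⟩ | ⟨rfl, rfl⟩
      · have huniv := helperA hne dich hA hz
        exact Or.inr ⟨z, fun h => hz (h (mem_N_self _ _)),
          fun u hu => absurd (fun a _ => huniv.ge (Finset.mem_univ a)) hu⟩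
      · have huniv := helperA hne.symm (fun z a h1 h2 => (dich z a h1 h2).symm) hA hz
        exact Or.inr ⟨z, fun h => hz (h (mem_N_self _ _)),
          fun u hu => absurd (fun a _ => huniv.ge (Finset.mem_univ a)) hu⟩
  · by_cases hleg : N G' w0 ⊆ N G' v
    · -- Case B2 : Dominator's imagined reply is illegal in G'
      obtain ⟨z, hz1, hz2⟩ := Finset.not_subset.mp hw0
      have hz3 : z ∉ N G' w0 := fun h => hz2 (sub v (hleg h))
      rcases dich w0 z hz1 hz3 with ⟨rfl, rfl⟩ | ⟨rfl, rfl⟩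
      · exact Or.inr ⟨z, fun h => hz2 (sub v (h (mem_N_self _ _))),
          fun u hu => Or.inl (helperB2 hne sub dich hw0 hz2 hleg hP1 u hu)⟩
      · exact Or.inr ⟨z, fun h => hz2 (sub v (h (mem_N_self _ _))),
          fun u hu => Or.inl (helperB2 hne.symm sub
            (fun z a h1 h2 => (dich z a h1 h2).symm) hw0 hz2 hleg hP1 u hu)⟩
    · -- Case B1 : Dominator's reply stays legal
      refine Or.inr ⟨w0, hleg, fun u hu => ?_⟩
      by_cases hD : N G' v ∪ N G' w0 ∪ N G' u = Finset.univ
      · exact Or.inl hD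
      · exact Or.inr (helperB1 sub dich hP1 hu hD)
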